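/- Fix n ≥ 1, real parameters β_1,…,β_p and γ_1,…,γ_p, and H : {0,1}^n → ℝ. For β ∈ ℝ set a_β(0,0) = a_β(1,1) = cos β and a_β(0,1) = a_β(1,0) = −i·sin β. Define QAOA amplitudes by α_{0,z} = 2^{−n/2} for all z ∈ {0,1}^n and α_{t+1,j} = Σ_{z∈{0,1}^n} (Π_{h=1}^{n} a_{β_{t+1}}(j_h, z_h)) · α_{t,z} · e^{−i γ_{t+1} H(z)}. Let δ = max_{ℓ∈ℝ} |{z : H(z) = ℓ}| / 2^n and Δ_t = max_{u∈ℂ} |{z : α_{t,z} = u}| / 2^n. Then for every t < p and every j ∈ {0,1}^n, |α_{t+1,j}| ≤ (2^{n+1}·(2 − Δ_t − δ) + 1) · max_{z} |α_{t,z}|. -/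

import Mathlib

open scoped Classical

/-- The entries of `exp(−iβσ_X)`: `a(0,0) = a(1,1) = cos β`, `a(0,1) = a(1,0) = −i·sin β`. -/
noncomputable def aEnt (β : ℝ) : Fin 2 → Fin 2 → ℂ :=
  fun i k => if i = k then ((Real.cos β : ℝ) : ℂ) else -Complex.I * ((Real.sin β : ℝ) : ℂ)

/-- QAOA amplitudes on `n` qubits for the diagonal Hamiltonian `Ham`:
`α_{0,z} = 2^{−n/2}` and
`α_{t+1,j} = Σ_z (Π_h a_{β_{t+1}}(j_h, z_h)) α_{t,z} e^{−iγ_{t+1} Ham(z)}`. -/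
noncomputable def qaoaAmp (n : ℕ) (β γ : ℕ → ℝ) (Ham : (Fin n → Fin 2) → ℝ) :
    ℕ → (Fin n → Fin 2) → ℂ
  | 0, _ => ((1 / Real.sqrt (2 ^ n) : ℝ) : ℂ)
  | t + 1, j =>
      ∑ z : Fin n → Fin 2,
        (∏ h : Fin n, aEnt (β (t + 1)) (j h) (z h)) * qaoaAmp n β γ Ham t z *
          Complex.exp (-(Complex.I * (γ (t + 1) : ℂ) * (Ham z : ℂ)))

/-- `δ = max_ℓ |{z : Ham(z) = ℓ}| / 2^n`, the maximum fraction of bit strings sharing the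
same objective value. -/
noncomputable def deltaFrac (n : ℕ) (Ham : (Fin n → Fin 2) → ℝ) : ℝ :=
  (⨆ ℓ : ℝ, ((Finset.univ.filter (fun z : Fin n → Fin 2 => Ham z = ℓ)).card : ℝ)) / 2 ^ n

/-- `Δ_t = max_u |{z : α_{t,z} = u}| / 2^n`, the maximum fraction of equal amplitudes at
step `t`. -/
noncomputable def eqAmpFrac (n : ℕ) (β γ : ℕ → ℝ) (Ham : (Fin n → Fin 2) → ℝ) (t : ℕ) : ℝ :=
  (⨆ u : ℂ,
    ((Finset.univ.filter (fun z : Fin n → Fin 2 => qaoaAmp n β γ Ham t z = u)).card : ℝ)) /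
    2 ^ n

lemma abs_aEnt_le (β : ℝ) (i k : Fin 2) : ‖aEnt β i k‖ ≤ 1 := by
  unfold aEnt
  split
  · rw [Complex.norm_real, Real.norm_eq_abs]
    exact Real.abs_cos_le_one β
  · rw [norm_mul]
    rw [show ‖-Complex.I‖ = 1 by simp, one_mul, Complex.norm_real, Real.norm_eq_abs]
    exact Real.abs_sin_le_one β

lemma abs_sum_aEnt (β : ℝ) (i : Fin 2) : ‖∑ k, aEnt β i k‖ = 1 := by
  have h : ∑ k, aEnt β i k = (Real.cos β : ℂ) + -Complex.I * (Real.sin β : ℂ) := by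
    rw [Fin.sum_univ_two]
    fin_cases i <;> simp [aEnt] <;> ring
  rw [h, Complex.norm_def, Complex.normSq_apply]
  have hre : ((Real.cos β : ℂ) + -Complex.I * (Real.sin β : ℂ)).re = Real.cos β := by
    simp [-Complex.ofReal_cos, -Complex.ofReal_sin]
  have him : ((Real.cos β : ℂ) + -Complex.I * (Real.sin β : ℂ)).im = -Real.sin β := by
    simp [-Complex.ofReal_cos, -Complex.ofReal_sin]
  rw [hre, him]
  have : Real.cos β * Real.cos β + -Real.sin β * -Real.sin β = 1 := by
    have := Real.sin_sq_add_cos_sq β; nlinarith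
  rw [this, Real.sqrt_one]

lemma abs_exp_phase (c d : ℝ) : ‖Complex.exp (-(Complex.I * (c : ℂ) * (d : ℂ)))‖ = 1 := by
  rw [Complex.norm_exp]
  simp

/-- For every `t < p` and every `j ∈ {0,1}^n`,
`|α_{t+1,j}| ≤ (2^{n+1}·(2 − Δ_t − δ) + 1) · max_z |α_{t,z}|`. -/
theorem qaoaAmp_step_bound (n : ℕ) (hn : 1 ≤ n) (p : ℕ) (β γ : ℕ → ℝ)
    (Ham : (Fin n → Fin 2) → ℝ) (t : ℕ) (ht : t < p) (j : Fin n → Fin 2) :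
    ‖qaoaAmp n β γ Ham (t + 1) j‖ ≤
      (2 ^ (n + 1) * (2 - eqAmpFrac n β γ Ham t - deltaFrac n Ham) + 1) *
        ⨆ z : Fin n → Fin 2, ‖qaoaAmp n β γ Ham t z‖ := by
  classical
  set α : (Fin n → Fin 2) → ℂ := qaoaAmp n β γ Ham t with hα
  have hcard : (Finset.univ : Finset (Fin n → Fin 2)).card = 2 ^ n := by
    simp [Finset.card_univ]
  set M : ℝ := ⨆ z : Fin n → Fin 2, ‖α z‖ with hMdef
  have hbdd : BddAbove (Set.range fun z : Fin n → Fin 2 => ‖α z‖) :=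
    Set.Finite.bddAbove (Set.finite_range _)
  have hMle : ∀ z, ‖α z‖ ≤ M := fun z => le_ciSup hbdd z
  have hM0 : 0 ≤ M := le_trans (norm_nonneg _) (hMle (fun _ => 0))
  -- maximizers for the Hamiltonian level sets and amplitude classes
  obtain ⟨z₁, -, hz₁max⟩ := Finset.exists_max_image (Finset.univ : Finset (Fin n → Fin 2))
    (fun z => (Finset.univ.filter (fun w : Fin n → Fin 2 => Ham w = Ham z)).card)
    ⟨fun _ => 0, Finset.mem_univ _⟩
  obtain ⟨z₂, -, hz₂max⟩ := Finset.exists_max_image (Finset.univ : Finset (Fin n → Fin 2))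
    (fun z => (Finset.univ.filter (fun w : Fin n → Fin 2 => α w = α z)).card)
    ⟨fun _ => 0, Finset.mem_univ _⟩
  set T : Finset (Fin n → Fin 2) := Finset.univ.filter (fun w => Ham w = Ham z₁) with hT
  set S : Finset (Fin n → Fin 2) := Finset.univ.filter (fun w => α w = α z₂) with hS
  have hTsup : deltaFrac n Ham = (T.card : ℝ) / 2 ^ n := by
    unfold deltaFrac
    congr 1
    apply le_antisymm
    · apply ciSup_le
      intro ℓ
      by_cases h : ∃ z : Fin n → Fin 2, Ham z = ℓ
      · obtain ⟨z, rfl⟩ := h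
        exact_mod_cast hz₁max z (Finset.mem_univ z)
      · have he : Finset.univ.filter (fun z : Fin n → Fin 2 => Ham z = ℓ) = ∅ := by
          rw [Finset.filter_eq_empty_iff]
          intro z _ hz
          exact h ⟨z, hz⟩
        rw [he]
        simp
    · have hb : BddAbove (Set.range fun ℓ : ℝ =>
          ((Finset.univ.filter (fun z : Fin n → Fin 2 => Ham z = ℓ)).card : ℝ)) := by
        refine ⟨(2 ^ n : ℝ), ?_⟩
        rintro x ⟨ℓ, rfl⟩
        have := Finset.card_le_card (Finset.filter_subset
          (fun z : Fin n → Fin 2 => Ham z = ℓ) Finset.univ)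
        rw [hcard] at this
        simp only []
        exact_mod_cast this
      exact le_ciSup hb (Ham z₁)
  have hSsup : eqAmpFrac n β γ Ham t = (S.card : ℝ) / 2 ^ n := by
    unfold eqAmpFrac
    congr 1
    apply le_antisymm
    · apply ciSup_le
      intro u
      by_cases h : ∃ z : Fin n → Fin 2, α z = u
      · obtain ⟨z, rfl⟩ := h
        exact_mod_cast hz₂max z (Finset.mem_univ z)
      · have he : Finset.univ.filter (fun z : Fin n → Fin 2 => α z = u) = ∅ := by
          rw [Finset.filter_eq_empty_iff]
          intro z _ hz
          exact h ⟨z, hz⟩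
        rw [show Finset.univ.filter (fun z : Fin n → Fin 2 => qaoaAmp n β γ Ham t z = u) = ∅
          from he]
        simp
    · have hb : BddAbove (Set.range fun u : ℂ =>
          ((Finset.univ.filter (fun z : Fin n → Fin 2 => qaoaAmp n β γ Ham t z = u)).card : ℝ)) := by
        refine ⟨(2 ^ n : ℝ), ?_⟩
        rintro x ⟨u, rfl⟩
        have := Finset.card_le_card (Finset.filter_subset
          (fun z : Fin n → Fin 2 => qaoaAmp n β γ Ham t z = u) Finset.univ)
        rw [hcard] at this
        simp only []
        exact_mod_cast this
      exact le_ciSup hb (α z₂)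
  set A : Finset (Fin n → Fin 2) := S ∩ T with hA
  set B : Finset (Fin n → Fin 2) := Finset.univ \ A with hB
  -- cardinality bound for B
  have hABcard : B.card + A.card = 2 ^ n := by
    rw [hB, ← hcard]
    exact Finset.card_sdiff_add_card_eq_card (Finset.subset_univ A)
  have hSTcard : A.card + (S ∪ T).card = S.card + T.card := by
    rw [hA]; exact Finset.card_inter_add_card_union S T
  have hUcard : (S ∪ T).card ≤ 2 ^ n := by
    rw [← hcard]; exact Finset.card_le_card (Finset.subset_univ _)
  have hBcard : (B.card : ℝ) ≤ 2 * 2 ^ n - S.card - T.card := by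
    have : B.card + S.card + T.card ≤ 2 * 2 ^ n := by omega
    have h2 : ((B.card + S.card + T.card : ℕ) : ℝ) ≤ ((2 * 2 ^ n : ℕ) : ℝ) := by
      exact_mod_cast this
    push_cast at h2
    linarith
  -- abbreviations
  set b : ℝ := β (t + 1) with hb
  set P : (Fin n → Fin 2) → ℂ := fun z => ∏ h : Fin n, aEnt b (j h) (z h) with hP
  set e : (Fin n → Fin 2) → ℂ := fun z =>
    Complex.exp (-(Complex.I * (γ (t + 1) : ℂ) * (Ham z : ℂ))) with he
  set f : (Fin n → Fin 2) → ℂ := fun z => P z * α z * e z with hf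
  have habsP : ∀ z, ‖P z‖ ≤ 1 := by
    intro z
    rw [hP]
    simp only [norm_prod]
    exact Finset.prod_le_one (fun h _ => norm_nonneg _) (fun h _ => abs_aEnt_le b (j h) (z h))
  have habse : ∀ z, ‖e z‖ = 1 := fun z => abs_exp_phase (γ (t + 1)) (Ham z)
  have habsf : ∀ z, ‖f z‖ ≤ M := by
    intro z
    rw [hf]
    simp only [norm_mul]
    rw [habse z, mul_one]
    calc ‖P z‖ * ‖α z‖ ≤ 1 * M :=
          mul_le_mul (habsP z) (hMle z) (norm_nonneg _) zero_le_one
      _ = M := one_mul M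
  have hPsum : ‖∑ z : Fin n → Fin 2, P z‖ = 1 := by
    have : ∑ z : Fin n → Fin 2, P z = ∏ h : Fin n, ∑ k : Fin 2, aEnt b (j h) k :=
      (Fintype.prod_sum fun h k => aEnt b (j h) k).symm
    rw [this, norm_prod]
    rw [Finset.prod_eq_one]
    intro h _
    exact abs_sum_aEnt b (j h)
  -- split the amplitude sum
  have hsplit : qaoaAmp n β γ Ham (t + 1) j = (∑ z ∈ B, f z) + (∑ z ∈ A, f z) := by
    rw [qaoaAmp]
    exact (Finset.sum_sdiff (Finset.subset_univ A)).symm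
  -- the coherent part
  set c : ℂ := α z₂ * Complex.exp (-(Complex.I * (γ (t + 1) : ℂ) * (Ham z₁ : ℂ))) with hc
  have hAcong : ∀ z ∈ A, f z = P z * c := by
    intro z hz
    rw [hA, Finset.mem_inter, hS, hT, Finset.mem_filter, Finset.mem_filter] at hz
    rw [hf, hc, he]
    simp only
    rw [hz.1.2, hz.2.2]
    ring
  have hAsum : ∑ z ∈ A, f z = (∑ z ∈ A, P z) * c := by
    rw [Finset.sum_congr rfl hAcong, Finset.sum_mul]
  have habsc : ‖c‖ ≤ M := by
    rw [hc, norm_mul, abs_exp_phase, mul_one]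
    exact hMle z₂
  have hPA : ‖∑ z ∈ A, P z‖ ≤ 1 + B.card := by
    have hAP : ∑ z ∈ A, P z = (∑ z : Fin n → Fin 2, P z) - ∑ z ∈ B, P z := by
      rw [eq_sub_iff_add_eq, add_comm]
      exact Finset.sum_sdiff (Finset.subset_univ A)
    rw [hAP]
    calc ‖(∑ z : Fin n → Fin 2, P z) - ∑ z ∈ B, P z‖
        ≤ ‖∑ z : Fin n → Fin 2, P z‖ + ‖∑ z ∈ B, P z‖ :=
          norm_sub_le _ _
      _ ≤ 1 + B.card := by
          rw [hPsum]
          gcongr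
          calc ‖∑ z ∈ B, P z‖ ≤ ∑ z ∈ B, ‖P z‖ :=
                norm_sum_le _ _
            _ ≤ ∑ z ∈ B, (1 : ℝ) := Finset.sum_le_sum (fun z _ => habsP z)
            _ = B.card := by simp
  have hBsum : ‖∑ z ∈ B, f z‖ ≤ B.card * M := by
    calc ‖∑ z ∈ B, f z‖ ≤ ∑ z ∈ B, ‖f z‖ := norm_sum_le _ _
      _ ≤ ∑ z ∈ B, M := Finset.sum_le_sum (fun z _ => habsf z)
      _ = B.card * M := by rw [Finset.sum_const, nsmul_eq_mul]
  have hAbound : ‖∑ z ∈ A, f z‖ ≤ (1 + B.card) * M := by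
    rw [hAsum, norm_mul]
    exact mul_le_mul hPA habsc (norm_nonneg _) (by positivity)
  have hmain : ‖qaoaAmp n β γ Ham (t + 1) j‖ ≤ (1 + 2 * B.card) * M := by
    rw [hsplit]
    have htri := norm_add_le (∑ z ∈ B, f z) (∑ z ∈ A, f z)
    nlinarith [hBsum, hAbound, htri]
  refine le_trans hmain ?_
  have hpow : (0 : ℝ) < 2 ^ n := by positivity
  have hcoef : (1 : ℝ) + 2 * B.card ≤
      2 ^ (n + 1) * (2 - eqAmpFrac n β γ Ham t - deltaFrac n Ham) + 1 := by
    rw [hSsup, hTsup]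
    have : (2 : ℝ) ^ (n + 1) * (2 - (S.card : ℝ) / 2 ^ n - (T.card : ℝ) / 2 ^ n)
        = 2 * (2 * 2 ^ n - S.card - T.card) := by
      field_simp
      ring
    rw [this]
    linarith
  exact mul_le_mul_of_nonneg_right hcoef hM0
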